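/- Let S = B((0,0,1),1) union B((0,0,-1),1) in R^3 (two unit balls touching at the origin). Then for all r >= 0, the volume of the r-parallel set is mu(B(S,r)) = (4/3) pi r^3 + 6 pi r^2 + 8 pi r + (8/3) pi; in particular the parallel volume is a polynomial in r of degree 3 with leading coefficient 4 pi/3 for all r >= 0. -/

import Mathlib

open MeasureTheory Metric Real

lemma disc_vol (t : ℝ) (ht : 0 ≤ t) :
    (volume : Measure (Fin 2 → ℝ)) {y | (y 0)^2 + (y 1)^2 ≤ t} = ENNReal.ofReal (π * t) := by
  have hmeas : MeasurableSet {y : Fin 2 → ℝ | (y 0)^2 + (y 1)^2 ≤ t} := by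
    apply measurableSet_le <;> fun_prop
  have h := (EuclideanSpace.volume_preserving_symm_measurableEquiv_toLp (Fin 2)).measure_preimage
      hmeas.nullMeasurableSet
  have hset : (MeasurableEquiv.toLp 2 (Fin 2 → ℝ)).symm ⁻¹' {y | (y 0)^2 + (y 1)^2 ≤ t}
      = closedBall (0 : EuclideanSpace ℝ (Fin 2)) (Real.sqrt t) := by
    ext x
    have hx0 : (MeasurableEquiv.toLp 2 (Fin 2 → ℝ)).symm x 0 = x 0 := rfl
    have hx1 : (MeasurableEquiv.toLp 2 (Fin 2 → ℝ)).symm x 1 = x 1 := rfl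
    simp [Set.mem_preimage, Set.mem_setOf_eq, mem_closedBall, EuclideanSpace.dist_eq,
      hx0, hx1, Fin.sum_univ_two, Real.dist_eq, sq_abs, Real.sqrt_le_sqrt_iff ht, sub_zero,
      EuclideanSpace.norm_eq]
  rw [hset, EuclideanSpace.volume_closedBall] at h
  rw [← h]
  have hcard : Fintype.card (Fin 2) = 2 := by simp
  rw [hcard]
  rw [show ((2:ℕ):ℝ)/2 + 1 = 2 by norm_num, Real.Gamma_two]
  rw [show Real.sqrt π ^ 2 = π from Real.sq_sqrt pi_nonneg]
  rw [← ENNReal.ofReal_pow (Real.sqrt_nonneg t), Real.sq_sqrt ht]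
  rw [← ENNReal.ofReal_mul ht]
  rw [div_one, mul_comm]

lemma real_int (R : ℝ) (hR : 1 ≤ R) :
    ∫ z in (0:ℝ)..(1+R), π * (R^2 - (z-1)^2) = π * (2/3*R^3 + R^2 - 1/3) := by
  have : ∀ z : ℝ, π * (R^2 - (z-1)^2) = (fun w => π * R^2 - π * w^2) (z - 1) := by
    intro z; simp; ring
  rw [intervalIntegral.integral_congr (g := fun z => (fun w => π * R^2 - π * w^2) (z-1))
    (fun z _ => this z)]
  rw [intervalIntegral.integral_comp_sub_right (fun w => π * R^2 - π * w^2) 1]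
  rw [intervalIntegral.integral_sub (f := fun _ => π * R^2) (g := fun w => π * w^2) intervalIntegrable_const
    (((continuous_const.mul (continuous_pow 2)).intervalIntegrable _ _))]
  rw [intervalIntegral.integral_const, intervalIntegral.integral_const_mul,
    integral_pow]
  simp only [smul_eq_mul]
  push_cast
  ring

lemma half_vol (R : ℝ) (hR : 1 ≤ R) :
    (volume : Measure (EuclideanSpace ℝ (Fin 3)))
      {x | (x 0)^2 + (x 1)^2 + (x 2 - 1)^2 ≤ R^2 ∧ 0 ≤ x 2}
    = ENNReal.ofReal (π * (2/3*R^3 + R^2 - 1/3)) := by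
  have hA : MeasurableSet {x : Fin 3 → ℝ | (x 0)^2 + (x 1)^2 + (x 2 - 1)^2 ≤ R^2 ∧ 0 ≤ x 2} := by
    have he : {x : Fin 3 → ℝ | (x 0)^2 + (x 1)^2 + (x 2 - 1)^2 ≤ R^2 ∧ 0 ≤ x 2}
        = {x : Fin 3 → ℝ | (x 0)^2 + (x 1)^2 + (x 2 - 1)^2 ≤ R^2} ∩ {x : Fin 3 → ℝ | 0 ≤ x 2} :=
      rfl
    rw [he]
    exact (measurableSet_le (by fun_prop) measurable_const).inter
      (measurableSet_le measurable_const (by fun_prop))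
  -- transfer to pi space
  have h1 := (EuclideanSpace.volume_preserving_symm_measurableEquiv_toLp (Fin 3)).measure_preimage
      hA.nullMeasurableSet
  have hpre : (MeasurableEquiv.toLp 2 (Fin 3 → ℝ)).symm ⁻¹'
      {x : Fin 3 → ℝ | (x 0)^2 + (x 1)^2 + (x 2 - 1)^2 ≤ R^2 ∧ 0 ≤ x 2}
      = {x : EuclideanSpace ℝ (Fin 3) | (x 0)^2 + (x 1)^2 + (x 2 - 1)^2 ≤ R^2 ∧ 0 ≤ x 2} := rfl
  rw [hpre] at h1
  rw [h1]
  -- transfer to ℝ × (Fin 2 → ℝ)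
  set B : Set (ℝ × (Fin 2 → ℝ)) :=
    {p | (p.2 0)^2 + (p.2 1)^2 + (p.1 - 1)^2 ≤ R^2 ∧ 0 ≤ p.1} with hBdef
  have hB : MeasurableSet B := by
    have he : B = {p : ℝ × (Fin 2 → ℝ) | (p.2 0)^2 + (p.2 1)^2 + (p.1 - 1)^2 ≤ R^2}
        ∩ {p : ℝ × (Fin 2 → ℝ) | 0 ≤ p.1} := rfl
    rw [he]
    exact (measurableSet_le (by fun_prop) measurable_const).inter
      (measurableSet_le measurable_const (by fun_prop))
  have h2 := (volume_preserving_piFinSuccAbove (fun _ : Fin 3 => ℝ) 2).measure_preimage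
      hB.nullMeasurableSet
  have hpre2 : (MeasurableEquiv.piFinSuccAbove (fun _ : Fin 3 => ℝ) 2) ⁻¹' B
      = {x : Fin 3 → ℝ | (x 0)^2 + (x 1)^2 + (x 2 - 1)^2 ≤ R^2 ∧ 0 ≤ x 2} := rfl
  rw [hpre2] at h2
  rw [h2, MeasureTheory.Measure.volume_eq_prod, Measure.prod_apply hB]
  -- slice volumes
  have hslice : ∀ z : ℝ, volume (Prod.mk z ⁻¹' B)
      = Set.indicator (Set.Ici (0:ℝ)) (fun z => ENNReal.ofReal (π * (R^2 - (z-1)^2))) z := by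
    intro z
    rw [Set.indicator_apply]
    by_cases hz : z ∈ Set.Ici (0:ℝ)
    · rw [if_pos hz]
      have hz' : (0:ℝ) ≤ z := hz
      have hpre3 : Prod.mk z ⁻¹' B = {y : Fin 2 → ℝ | (y 0)^2 + (y 1)^2 ≤ R^2 - (z-1)^2} := by
        ext y
        simp only [hBdef, Set.mem_preimage, Set.mem_setOf_eq]
        constructor
        · intro h; linarith [h.1]
        · intro h; exact ⟨by linarith, hz'⟩
      rw [hpre3]
      by_cases h2 : 0 ≤ R^2 - (z-1)^2
      · exact disc_vol _ h2
      · push_neg at h2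
        have hempty : {y : Fin 2 → ℝ | (y 0)^2 + (y 1)^2 ≤ R^2 - (z-1)^2} = ∅ := by
          ext y; simp only [Set.mem_setOf_eq, Set.mem_empty_iff_false, iff_false]
          push_neg; nlinarith [sq_nonneg (y 0), sq_nonneg (y 1)]
        rw [hempty, measure_empty, Eq.comm, ENNReal.ofReal_eq_zero]
        nlinarith [pi_pos]
    · rw [if_neg hz]
      have hempty : Prod.mk z ⁻¹' B = ∅ := by
        ext y; simp only [hBdef, Set.mem_preimage, Set.mem_setOf_eq, Set.mem_empty_iff_false,
          iff_false, not_and]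
        intro _; simpa using hz
      rw [hempty, measure_empty]
  simp_rw [hslice]
  rw [lintegral_indicator measurableSet_Ici]
  -- split the integral
  have hsplit : Set.Ici (0:ℝ) = Set.Icc 0 (1+R) ∪ Set.Ioi (1+R) :=
    (Set.Icc_union_Ioi_eq_Ici (by linarith)).symm
  rw [hsplit, lintegral_union measurableSet_Ioi (Set.disjoint_left.mpr (fun z hz hz' => absurd hz.2 (not_le.mpr hz')))]
  have hzero : ∫⁻ z in Set.Ioi (1+R), ENNReal.ofReal (π * (R^2 - (z-1)^2)) = 0 := by
    have hz : ∀ z ∈ Set.Ioi (1+R),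
        ENNReal.ofReal (π * (R^2 - (z-1)^2)) = (fun _ => (0:ENNReal)) z := by
      intro z hz
      simp only [ENNReal.ofReal_eq_zero]
      have h1 : R < z - 1 := by have := Set.mem_Ioi.mp hz; linarith
      have h2 : R^2 ≤ (z-1)^2 := by nlinarith
      nlinarith [pi_pos]
    rw [setLIntegral_congr_fun measurableSet_Ioi hz,
      lintegral_zero]
  rw [hzero, add_zero]
  -- convert to a real integral
  have hcont : Continuous (fun z : ℝ => π * (R^2 - (z-1)^2)) := by fun_prop
  have hnn : 0 ≤ᵐ[volume.restrict (Set.Icc (0:ℝ) (1+R))] fun z => π * (R^2 - (z-1)^2) := by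
    filter_upwards [MeasureTheory.ae_restrict_mem measurableSet_Icc] with z hz
    have h2 : (z-1)^2 ≤ R^2 := by nlinarith [hz.1, hz.2]
    have := pi_nonneg
    show (0:ℝ) ≤ π * (R^2 - (z-1)^2)
    nlinarith
  rw [← MeasureTheory.ofReal_integral_eq_lintegral_ofReal hcont.integrableOn_Icc hnn]
  rw [MeasureTheory.integral_Icc_eq_integral_Ioc,
    ← intervalIntegral.integral_of_le (by linarith : (0:ℝ) ≤ 1+R), real_int R hR]

theorem stmt_18 (c : EuclideanSpace ℝ (Fin 3))
    (hc : c = (EuclideanSpace.equiv (Fin 3) ℝ).symm ![0, 0, 1])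
    (S : Set (EuclideanSpace ℝ (Fin 3)))
    (hS : S = closedBall c 1 ∪ closedBall (-c) 1) :
    ∀ r : ℝ, 0 ≤ r →
      (volume (cthickening r S)).toReal
        = 4 / 3 * π * r ^ 3 + 6 * π * r ^ 2 + 8 * π * r + 8 / 3 * π := by
  intro r hr
  have hR : (1:ℝ) ≤ r + 1 := by linarith
  have hRpos : (0:ℝ) ≤ r + 1 := by linarith
  have hc0 : c 0 = 0 := by rw [hc]; rfl
  have hc1 : c 1 = 0 := by rw [hc]; rfl
  have hc2 : c 2 = 1 := by rw [hc]; rfl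
  have hU : cthickening r S = closedBall c (r+1) ∪ closedBall (-c) (r+1) := by
    rw [hS, cthickening_union, cthickening_closedBall hr zero_le_one,
      cthickening_closedBall hr zero_le_one]
  set U := closedBall c (r+1) ∪ closedBall (-c) (r+1) with hUdef
  -- membership characterizations
  have hmem : ∀ x : EuclideanSpace ℝ (Fin 3),
      x ∈ closedBall c (r+1) ↔ (x 0)^2 + (x 1)^2 + (x 2 - 1)^2 ≤ (r+1)^2 := by
    intro x
    rw [mem_closedBall, EuclideanSpace.dist_eq, Fin.sum_univ_three, hc0, hc1, hc2]
    simp only [Real.dist_eq, sq_abs, sub_zero]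
    exact Real.sqrt_le_left hRpos
  have hmem' : ∀ x : EuclideanSpace ℝ (Fin 3),
      x ∈ closedBall (-c) (r+1) ↔ (x 0)^2 + (x 1)^2 + (x 2 + 1)^2 ≤ (r+1)^2 := by
    intro x
    have e0 : (-c) 0 = 0 := by show -(c 0) = 0; rw [hc0, neg_zero]
    have e1 : (-c) 1 = 0 := by show -(c 1) = 0; rw [hc1, neg_zero]
    have e2 : (-c) 2 = -1 := by show -(c 2) = -1; rw [hc2]
    rw [mem_closedBall, EuclideanSpace.dist_eq, Fin.sum_univ_three, e0, e1, e2]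
    simp only [Real.dist_eq, sq_abs, sub_zero, sub_neg_eq_add]
    exact Real.sqrt_le_left hRpos
  set P : Set (EuclideanSpace ℝ (Fin 3)) := {x | 0 ≤ x 2} with hPdef
  set N : Set (EuclideanSpace ℝ (Fin 3)) := {x | x 2 ≤ 0} with hNdef
  have hUP : U ∩ P = closedBall c (r+1) ∩ P := by
    ext x
    simp only [hUdef, hPdef, Set.mem_inter_iff, Set.mem_union, Set.mem_setOf_eq]
    constructor
    · rintro ⟨hx | hx, hp⟩
      · exact ⟨hx, hp⟩
      · refine ⟨?_, hp⟩
        rw [hmem]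
        rw [hmem'] at hx
        nlinarith
    · rintro ⟨hx, hp⟩; exact ⟨Or.inl hx, hp⟩
  have hUN : U ∩ N = closedBall (-c) (r+1) ∩ N := by
    ext x
    simp only [hUdef, hNdef, Set.mem_inter_iff, Set.mem_union, Set.mem_setOf_eq]
    constructor
    · rintro ⟨hx | hx, hp⟩
      · refine ⟨?_, hp⟩
        rw [hmem']
        rw [hmem] at hx
        nlinarith
      · exact ⟨hx, hp⟩
    · rintro ⟨hx, hp⟩; exact ⟨Or.inr hx, hp⟩
  have hNegSet : closedBall (-c) (r+1) ∩ N = -(closedBall c (r+1) ∩ P) := by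
    ext x
    rw [Set.mem_neg]
    simp only [hPdef, hNdef, Set.mem_inter_iff, Set.mem_setOf_eq]
    rw [hmem, hmem']
    have hx0 : (-x) 0 = -(x 0) := rfl
    have hx1 : (-x) 1 = -(x 1) := rfl
    have hx2 : (-x) 2 = -(x 2) := rfl
    rw [hx0, hx1, hx2]
    constructor
    · rintro ⟨h1, h2⟩
      exact ⟨by nlinarith, by linarith⟩
    · rintro ⟨h1, h2⟩
      exact ⟨by nlinarith, by linarith⟩
  have hplane : (volume : Measure (EuclideanSpace ℝ (Fin 3))) {x | x 2 = 0} = 0 := by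
    have h : {x : EuclideanSpace ℝ (Fin 3) | x 2 = 0}
        = (LinearMap.ker (EuclideanSpace.projₗ (𝕜 := ℝ) (2 : Fin 3)) :
            Set (EuclideanSpace ℝ (Fin 3))) := by
      ext x; simp [LinearMap.mem_ker]
    rw [h]
    apply Measure.addHaar_submodule
    intro htop
    have hmemtop : c ∈ LinearMap.ker (EuclideanSpace.projₗ (𝕜 := ℝ) (2 : Fin 3)) :=
      htop ▸ Submodule.mem_top
    have h1 : c 2 = 0 := hmemtop
    rw [hc2] at h1
    norm_num at h1
  -- measurability
  have hmeasN : MeasurableSet (U ∩ N) := by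
    refine ((Metric.isClosed_closedBall.union Metric.isClosed_closedBall).inter ?_).measurableSet
    exact isClosed_le (EuclideanSpace.proj (𝕜 := ℝ) (2 : Fin 3)).continuous continuous_const
  have hunion_eq : (U ∩ P) ∪ (U ∩ N) = U := by
    ext x
    constructor
    · rintro (h | h) <;> exact h.1
    · intro h
      rcases le_total 0 (x 2) with h2 | h2
      · exact Or.inl ⟨h, h2⟩
      · exact Or.inr ⟨h, h2⟩
  have hsub : (U ∩ P) ∩ (U ∩ N) ⊆ {x | x 2 = 0} := fun x hx =>
    le_antisymm hx.2.2 hx.1.2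
  have key := measure_union_add_inter (μ := (volume : Measure (EuclideanSpace ℝ (Fin 3))))
    (U ∩ P) hmeasN
  rw [hunion_eq, measure_mono_null hsub hplane, add_zero] at key
  -- compute the half volume
  have hhalf : closedBall c (r+1) ∩ P
      = {x : EuclideanSpace ℝ (Fin 3) | (x 0)^2 + (x 1)^2 + (x 2 - 1)^2 ≤ (r+1)^2 ∧ 0 ≤ x 2} := by
    ext x
    simp only [hPdef, Set.mem_inter_iff, Set.mem_setOf_eq, hmem]
  have h1 : volume (closedBall c (r+1) ∩ P)
      = ENNReal.ofReal (π * (2/3*(r+1)^3 + (r+1)^2 - 1/3)) := by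
    rw [hhalf]; exact half_vol (r+1) hR
  have h2 : volume (U ∩ N) = ENNReal.ofReal (π * (2/3*(r+1)^3 + (r+1)^2 - 1/3)) := by
    rw [hUN, hNegSet, Measure.measure_neg, h1]
  have hvol : volume (cthickening r S)
      = ENNReal.ofReal (π * (2/3*(r+1)^3 + (r+1)^2 - 1/3))
        + ENNReal.ofReal (π * (2/3*(r+1)^3 + (r+1)^2 - 1/3)) := by
    rw [hU, key, hUP, h1, h2]
  rw [hvol]
  have hnn : (0:ℝ) ≤ π * (2/3*(r+1)^3 + (r+1)^2 - 1/3) := by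
    have e3 : (r+1)^3 = r^3+3*r^2+3*r+1 := by ring
    have e2 : (r+1)^2 = r^2+2*r+1 := by ring
    have hcube : (1:ℝ) ≤ (r+1)^3 := by
      rw [e3]; nlinarith [pow_nonneg hr 3, sq_nonneg r]
    have hsq : (1:ℝ) ≤ (r+1)^2 := by rw [e2]; nlinarith [sq_nonneg r]
    have := pi_nonneg
    nlinarith
  rw [ENNReal.toReal_add ENNReal.ofReal_ne_top ENNReal.ofReal_ne_top,
    ENNReal.toReal_ofReal hnn]
  ring
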